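/- Let m be an odd positive integer and n = 2m. For the power mapping F(x) = x^{2^m+2} over F_{2^n}, the differential spectrum is given by ω_0 = 2^n - 2^{n-2}, ω_1 = ω_2 = ω_3 = 0, ω_4 = 2^{n-2}, and ω_i = 0 for all i > 4; in particular δ(b) ∈ {0, 4} for every b ∈ F_{2^n}. -/
import Mathlib

open Finset


/-- The number of `x` in the field `F` with `(x+1)^d - x^d = b`. -/
def deltaF (F : Type*) [Field F] [Fintype F] [DecidableEq F] (d : ℕ) (b : F) : ℕ :=
  (Finset.univ.filter (fun x : F => (x + 1) ^ d - x ^ d = b)).card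

/-- The number of `b` in the field `F` with `deltaF F d b = i`. -/
def omegaF (F : Type*) [Field F] [Fintype F] [DecidableEq F] (d i : ℕ) : ℕ :=
  (Finset.univ.filter (fun b : F => deltaF F d b = i)).card

/-- Differential spectrum of `x^(2^m+2)` over `F_{2^n}`, `n = 2m`, `m` odd. -/
theorem stmt5 (m : ℕ) (hm : 0 < m) (hmo : Odd m) (n : ℕ) (hn : n = 2 * m)
    (F : Type*) [Field F] [Fintype F] [DecidableEq F]
    (hF : Fintype.card F = 2 ^ n) :
    omegaF F (2 ^ m + 2) 0 = 2 ^ n - 2 ^ (n - 2) ∧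
    omegaF F (2 ^ m + 2) 1 = 0 ∧
    omegaF F (2 ^ m + 2) 2 = 0 ∧
    omegaF F (2 ^ m + 2) 3 = 0 ∧
    omegaF F (2 ^ m + 2) 4 = 2 ^ (n - 2) ∧
    (∀ i, 4 < i → omegaF F (2 ^ m + 2) i = 0) ∧
    (∀ b : F, deltaF F (2 ^ m + 2) b ∈ ({0, 4} : Set ℕ)) := by
  have hn2 : 2 ≤ n := by omega
  -- characteristic 2
  have hcast : ((Fintype.card F : ℕ) : F) = 0 := FiniteField.cast_card_eq_zero F
  have h2z : (2 : F) = 0 := by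
    rw [hF] at hcast
    push_cast at hcast
    exact pow_eq_zero_iff (by omega) |>.mp hcast
  haveI hchar : CharP F 2 := by
    have hdvd : ringChar F ∣ 2 := (ringChar.spec F 2).mp (by exact_mod_cast h2z)
    have hprime : (ringChar F).Prime := CharP.char_is_prime F (ringChar F)
    have : ringChar F = 2 := (Nat.prime_dvd_prime_iff_eq hprime (by norm_num)).mp hdvd
    exact this ▸ ringChar.charP F
  set d := 2 ^ m + 2 with hd
  set f : F → F := fun x => x ^ (2 ^ m) + x ^ 2 with hf
  -- key identity
  have hB : ∀ x : F, (x + 1) ^ d - x ^ d = f x + 1 := by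
    intro x
    have h1 : (x + 1) ^ (2 ^ m) = x ^ (2 ^ m) + 1 := by rw [add_pow_char_pow]; simp
    have h2 : (x + 1) ^ 2 = x ^ 2 + 1 := by rw [add_pow_char]; simp
    show (x + 1) ^ d - x ^ d = (x ^ (2 ^ m) + x ^ 2) + 1
    rw [hd, pow_add, pow_add, h1, h2, CharTwo.sub_eq_add]
    generalize x ^ (2 ^ m) = y
    linear_combination (y * x ^ 2 + 1) * h2z - h2z
  -- additivity of f
  have hadd : ∀ x y : F, f (x + y) = f x + f y := by
    intro x y
    simp only [hf]
    rw [add_pow_char_pow, add_pow_char]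
    ring
  -- cube root of unity
  haveI : Fact (Nat.Prime 3) := ⟨by norm_num⟩
  have h3dvd : 3 ∣ Fintype.card Fˣ := by
    rw [Fintype.card_units, hF, hn, pow_mul]
    have := Nat.sub_dvd_pow_sub_pow 4 1 m
    simpa using this
  obtain ⟨ζ, hζ⟩ := exists_prime_orderOf_dvd_card 3 h3dvd
  set z : F := (ζ : F) with hzdef
  have hz0 : z ≠ 0 := Units.ne_zero ζ
  have hz3 : z ^ 3 = 1 := by
    have : ζ ^ 3 = 1 := by rw [← hζ]; exact pow_orderOf_eq_one ζ
    rw [hzdef, ← Units.val_pow_eq_pow_val, this, Units.val_one]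
  have hz1 : z ≠ 1 := by
    intro h
    have : ζ = 1 := Units.ext h
    rw [this, orderOf_one] at hζ; norm_num at hζ
  have hs : 1 + z + z ^ 2 = 0 := by
    have h : (z - 1) * (z ^ 2 + z + 1) = 0 := by linear_combination hz3
    rcases mul_eq_zero.mp h with h | h
    · exact absurd (sub_eq_zero.mp h) hz1
    · linear_combination h
  have hz2ne1 : z ^ 2 ≠ 1 := by
    intro h
    apply hz1
    calc z = z ^ 2 * z := by rw [h, one_mul]
    _ = z ^ 3 := by ring
    _ = 1 := hz3
  have hzne2 : z ≠ z ^ 2 := by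
    intro h
    apply hz2ne1
    have h1 : z ^ 2 * z = 1 := by rw [← pow_succ]; exact hz3
    rw [← h] at h1
    rw [pow_two]; exact h1
  -- kernel
  have hpowcard : ∀ x : F, x ^ (2 ^ n) = x := by
    intro x; rw [← hF]; exact FiniteField.pow_card x
  have hker_iff : ∀ x : F, f x = 0 ↔ x ^ 4 = x := by
    intro x
    simp only [hf]
    rw [CharTwo.add_eq_iff_eq_add, zero_add]
    constructor
    · intro h
      have h1 : (x ^ (2 ^ m)) ^ (2 ^ m) = x := by
        rw [← pow_mul, ← pow_add, ← two_mul, ← hn]; exact hpowcard x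
      rw [h] at h1
      calc x ^ 4 = ((x ^ 2) ^ (2 ^ m)) := by
            rw [← pow_mul, mul_comm, pow_mul, h]; ring
      _ = x := by rw [← h] at h1 ⊢; exact h1
    · intro h
      obtain ⟨k, hk⟩ := hmo
      have h4 : ∀ j : ℕ, x ^ (4 ^ j) = x := by
        intro j
        induction j with
        | zero => simp
        | succ j ih => rw [pow_succ, pow_mul, ih, h]
      have : 2 ^ m = 4 ^ k * 2 := by
        rw [hk]; rw [pow_succ, show (4:ℕ) = 2^2 by norm_num, ← pow_mul]
      rw [this, pow_mul, h4 k]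
  have hker_eq : (univ.filter fun x : F => f x = 0) = {0, 1, z, z ^ 2} := by
    ext x
    simp only [mem_filter, mem_univ, true_and, mem_insert, mem_singleton]
    rw [hker_iff]
    constructor
    · intro h
      have hfac : x * (x - 1) * (x - z) * (x - z ^ 2) = 0 := by
        have hz4 : z ^ 3 = 1 := hz3
        linear_combination h + (x^2 - x^3) * hs + (x^2 - x) * hz4
      rcases mul_eq_zero.mp hfac with h' | h'
      · rcases mul_eq_zero.mp h' with h'' | h''
        · rcases mul_eq_zero.mp h'' with h3 | h3
          · exact Or.inl h3
          · exact Or.inr (Or.inl (sub_eq_zero.mp h3))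
        · exact Or.inr (Or.inr (Or.inl (sub_eq_zero.mp h'')))
      · exact Or.inr (Or.inr (Or.inr (sub_eq_zero.mp h')))
    · rintro (rfl | rfl | rfl | rfl)
      · simp
      · simp
      · calc z ^ 4 = z ^ 3 * z := by ring
        _ = z := by rw [hz3, one_mul]
      · calc (z ^ 2) ^ 4 = (z ^ 3) ^ 2 * z ^ 2 := by ring
        _ = z ^ 2 := by rw [hz3, one_pow, one_mul]
  have hker_card : (univ.filter fun x : F => f x = 0).card = 4 := by
    rw [hker_eq]
    have n1 : (0:F) ∉ ({1, z, z ^ 2} : Finset F) := by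
      simp only [mem_insert, mem_singleton]
      push_neg
      exact ⟨zero_ne_one, fun h => hz0 h.symm, fun h => (pow_ne_zero 2 hz0) h.symm⟩
    have n2 : (1:F) ∉ ({z, z ^ 2} : Finset F) := by
      simp only [mem_insert, mem_singleton]
      push_neg
      exact ⟨fun h => hz1 h.symm, fun h => hz2ne1 h.symm⟩
    have n3 : z ∉ ({z ^ 2} : Finset F) := by
      simp only [mem_singleton]; exact hzne2
    rw [card_insert_of_notMem n1, card_insert_of_notMem n2, card_insert_of_notMem n3,
      card_singleton]
  -- fibers
  have hfiber : ∀ x0 : F, (univ.filter fun x : F => f x = f x0).card = 4 := by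
    intro x0
    rw [← hker_card]
    apply Finset.card_bij' (fun x _ => x + x0) (fun x _ => x + x0)
    · intro a ha
      simp only [mem_filter, mem_univ, true_and] at ha ⊢
      rw [hadd, ha, CharTwo.add_self_eq_zero]
    · intro a ha
      simp only [mem_filter, mem_univ, true_and] at ha ⊢
      rw [hadd, ha, zero_add]
    · intro a _; rw [add_assoc, CharTwo.add_self_eq_zero, add_zero]
    · intro a _; rw [add_assoc, CharTwo.add_self_eq_zero, add_zero]
  set D : F → F := fun x => (x + 1) ^ d - x ^ d with hD
  set I : Finset F := univ.image D with hI
  have hdelta : ∀ b : F, deltaF F d b = if b ∈ I then 4 else 0 := by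
    intro b
    by_cases hb : b ∈ I
    · rw [if_pos hb]
      obtain ⟨x0, _, hx0⟩ := mem_image.mp hb
      have : (univ.filter fun x : F => (x + 1) ^ d - x ^ d = b)
          = (univ.filter fun x : F => f x = f x0) := by
        ext x
        simp only [mem_filter, mem_univ, true_and]
        rw [← hx0, show D x0 = f x0 + 1 from hB x0, hB x]
        constructor
        · intro h; exact add_right_cancel h
        · intro h; rw [h]
      rw [deltaF, this, hfiber]
    · rw [if_neg hb]
      rw [deltaF, Finset.card_eq_zero, Finset.filter_eq_empty_iff]
      intro x _
      intro h
      exact hb (mem_image.mpr ⟨x, mem_univ x, h⟩)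
  -- card of image
  have hcount : Fintype.card F = 4 * I.card := by
    have h := Finset.card_eq_sum_card_image D (univ : Finset F)
    rw [Finset.card_univ] at h
    rw [h]
    rw [Finset.sum_congr rfl (fun b hb => by
      have : (univ.filter fun x : F => D x = b).card = deltaF F d b := rfl
      rw [this, hdelta b, if_pos hb])]
    rw [Finset.sum_const, smul_eq_mul, mul_comm]
  have hIcard : I.card = 2 ^ (n - 2) := by
    have h4 : (2:ℕ) ^ n = 4 * 2 ^ (n - 2) := by
      rw [show n = 2 + (n - 2) by omega, pow_add]
      norm_num
    rw [hF, h4] at hcount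
    omega
  -- conclusions
  have hω4 : omegaF F d 4 = 2 ^ (n - 2) := by
    rw [omegaF, ← hIcard]
    congr 1
    ext b
    simp only [mem_filter, mem_univ, true_and, hdelta b]
    split <;> simp_all
  have hω0 : omegaF F d 0 = 2 ^ n - 2 ^ (n - 2) := by
    rw [omegaF]
    have : (univ.filter fun b : F => deltaF F d b = 0) = univ \ I := by
      ext b
      simp only [mem_filter, mem_univ, true_and, mem_sdiff, hdelta b]
      split <;> simp_all
    rw [this, Finset.card_sdiff_of_subset (Finset.subset_univ I), Finset.card_univ, hF, hIcard]
  have hωother : ∀ i, i ≠ 0 → i ≠ 4 → omegaF F d i = 0 := by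
    intro i h0 h4
    rw [omegaF, Finset.card_eq_zero, Finset.filter_eq_empty_iff]
    intro b _
    rw [hdelta b]
    split <;> omega
  refine ⟨hω0, hωother 1 (by norm_num) (by norm_num), hωother 2 (by norm_num) (by norm_num),
    hωother 3 (by norm_num) (by norm_num), hω4, fun i hi => hωother i (by omega) (by omega),
    fun b => ?_⟩
  rw [hdelta b]
  split <;> simp
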